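/- Let m ≥ 1 and let α, x, y ∈ ℝ^m have strictly positive entries. Then with d(a,b) := (a−b)²/(ab), one has d(∑_{k∈[m]} α_k x_k, ∑_{k∈[m]} α_k y_k) ≤ max_{k∈[m]} d(x_k, y_k). -/
import Mathlib

lemma aux_pt (a b u v c : ℝ) (ha : 0 < a) (hb : 0 < b) (hu : 0 < u) (hv : 0 < v)
    (h1 : a^2 + b^2 ≤ c * (a*b)) (h2 : u^2 + v^2 ≤ c * (u*v)) :
    a*u + b*v ≤ c/2 * (a*v + u*b) := by
  nlinarith [sq_nonneg (a*v - b*u), mul_pos ha hu,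
    mul_le_mul_of_nonneg_left h2 (sq_nonneg a),
    mul_le_mul_of_nonneg_left h1 (sq_nonneg u)]

theorem leave_one_out_d_sum (m : ℕ) (hm : 0 < m) (α x y : Fin m → ℝ)
    (hα : ∀ k, 0 < α k) (hx : ∀ k, 0 < x k) (hy : ∀ k, 0 < y k) :
    ((∑ k, α k * x k) - (∑ k, α k * y k)) ^ 2 /
        ((∑ k, α k * x k) * (∑ k, α k * y k)) ≤
      Finset.univ.sup' (Finset.univ_nonempty_iff.mpr ⟨⟨0, hm⟩⟩)
        (fun k => (x k - y k) ^ 2 / (x k * y k)) := by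
  set Sx := ∑ k, α k * x k with hSx
  set Sy := ∑ k, α k * y k with hSy
  set M := Finset.univ.sup' (Finset.univ_nonempty_iff.mpr ⟨⟨0, hm⟩⟩)
      (fun k => (x k - y k) ^ 2 / (x k * y k)) with hMdef
  have hSxpos : 0 < Sx := Finset.sum_pos (fun k _ => mul_pos (hα k) (hx k)) ⟨⟨0, hm⟩, Finset.mem_univ _⟩
  have hSypos : 0 < Sy := Finset.sum_pos (fun k _ => mul_pos (hα k) (hy k)) ⟨⟨0, hm⟩, Finset.mem_univ _⟩
  have hMk : ∀ k, (x k)^2 + (y k)^2 ≤ (2 + M) * (x k * y k) := by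
    intro k
    have h := Finset.le_sup' (fun k => (x k - y k) ^ 2 / (x k * y k)) (Finset.mem_univ k)
    rw [div_le_iff₀ (mul_pos (hx k) (hy k))] at h
    nlinarith [h]
  -- key inequality
  have e1 : Sx^2 + Sy^2 = ∑ j, ∑ k, (α j * α k) * (x j * x k + y j * y k) := by
    rw [sq, sq, hSx, hSy, Finset.sum_mul_sum, Finset.sum_mul_sum, ← Finset.sum_add_distrib]
    refine Finset.sum_congr rfl fun j _ => ?_
    rw [← Finset.sum_add_distrib]
    exact Finset.sum_congr rfl fun k _ => by ring
  have e3 : Sx * Sy = ∑ j, ∑ k, (α j * α k) * (x j * y k) := by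
    rw [hSx, hSy, Finset.sum_mul_sum]
    refine Finset.sum_congr rfl fun j _ => Finset.sum_congr rfl fun k _ => by ring
  have e4 : ∑ j, ∑ k, (α j * α k) * (x k * y j) = Sx * Sy := by
    rw [e3, Finset.sum_comm]
    exact Finset.sum_congr rfl fun j _ => Finset.sum_congr rfl fun k _ => by ring
  have key : Sx^2 + Sy^2 ≤ (2 + M) * (Sx * Sy) := by
    rw [e1]
    calc ∑ j, ∑ k, (α j * α k) * (x j * x k + y j * y k)
        ≤ ∑ j, ∑ k, (α j * α k) * ((2+M)/2 * (x j * y k + x k * y j)) := by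
          refine Finset.sum_le_sum fun j _ => Finset.sum_le_sum fun k _ => ?_
          refine mul_le_mul_of_nonneg_left ?_ (le_of_lt (mul_pos (hα j) (hα k)))
          exact aux_pt (x j) (y j) (x k) (y k) (2+M) (hx j) (hy j) (hx k) (hy k) (hMk j) (hMk k)
      _ = (2+M) * (Sx * Sy) := by
          have : ∀ j k : Fin m, (α j * α k) * ((2+M)/2 * (x j * y k + x k * y j))
              = (2+M)/2 * ((α j * α k) * (x j * y k)) + (2+M)/2 * ((α j * α k) * (x k * y j)) := by
            intro j k; ring
          simp only [this, Finset.sum_add_distrib, ← Finset.mul_sum]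
          rw [← e3] at *
          rw [show (∑ j, ∑ k, (α j * α k) * (x k * y j)) = Sx * Sy from e4]
          ring
  rw [div_le_iff₀ (mul_pos hSxpos hSypos)]
  nlinarith [key]
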